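/- Let A_0 be a positively graded ℂ-algebra and let A be a graded deformation of A_0 over ℂ[t] with t in degree 1; that is, A is a graded ℂ[t]-algebra, flat (equivalently, torsion-free) as a ℂ[t]-module, with a graded algebra isomorphism A/tA ≅ A_0. Then A/(t−1)A is a filtered algebra whose associated graded algebra is isomorphic to A_0. -/

import Mathlib

open DirectSum

section Aux
variable {A₀ A B : Type} [Ring A₀] [Algebra ℂ A₀] [Ring A] [Algebra ℂ A]
  [Ring B] [Algebra ℂ B]

variable (𝒜 : ℤ → Submodule ℂ A) [GradedAlgebra 𝒜]

/-- The filtration `F_{≤ n} A = ⨆_{i ≤ n} Aᵢ` on `A`. -/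
noncomputable def Asub (n : ℤ) : Submodule ℂ A := ⨆ i : ℤ, ⨆ _ : i ≤ n, 𝒜 i

lemma Asub_eq (n : ℤ) : Asub 𝒜 n = ⨆ i : {i : ℤ // i ≤ n}, 𝒜 i.1 := by
  rw [Asub, iSup_subtype]

lemma mem_Asub_of_mem {i n : ℤ} (h : i ≤ n) {a : A} (ha : a ∈ 𝒜 i) : a ∈ Asub 𝒜 n := by
  have : 𝒜 i ≤ Asub 𝒜 n := le_iSup_of_le i (le_iSup_of_le h le_rfl)
  exact this ha

lemma decompose_eq_zero_of_mem_Asub {n j : ℤ} {a : A} (ha : a ∈ Asub 𝒜 n) (hj : n < j) :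
    (DirectSum.decompose 𝒜 a j : A) = 0 := by
  rw [Asub_eq] at ha
  refine Submodule.iSup_induction (motive := fun a : A => (DirectSum.decompose 𝒜 a j : A) = 0)
      (fun i : {i : ℤ // i ≤ n} => 𝒜 i.1) ha (fun i x hx => ?_) (by simp) (fun x y hx hy => ?_)
  · exact DirectSum.decompose_of_mem_ne 𝒜 hx (by omega)
  · show (DirectSum.decompose 𝒜 (x + y) j : A) = 0
    rw [DirectSum.decompose_add, DirectSum.add_apply, Submodule.coe_add]
    beta_reduce at hx hy
    rw [hx, hy, add_zero]

lemma mem_Asub_iff {n : ℤ} {a : A} :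
    a ∈ Asub 𝒜 n ↔ ∀ j, n < j → (DirectSum.decompose 𝒜 a j : A) = 0 := by
  classical
  refine ⟨fun ha j hj => decompose_eq_zero_of_mem_Asub 𝒜 ha hj, fun h => ?_⟩
  rw [← DirectSum.sum_support_decompose 𝒜 a]
  refine Submodule.sum_mem _ (fun j hj => ?_)
  by_cases hjn : j ≤ n
  · exact mem_Asub_of_mem 𝒜 hjn (DirectSum.decompose 𝒜 a j).2
  · rw [h j (lt_of_not_ge hjn)]; exact zero_mem _

lemma Asub_mono {m n : ℤ} (h : m ≤ n) : Asub 𝒜 m ≤ Asub 𝒜 n := by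
  intro a ha
  rw [mem_Asub_iff] at ha ⊢
  exact fun j hj => ha j (by omega)

lemma mul_mem_Asub {m n : ℤ} {a b : A} (ha : a ∈ Asub 𝒜 m) (hb : b ∈ Asub 𝒜 n) :
    a * b ∈ Asub 𝒜 (m + n) := by
  rw [Asub_eq] at ha hb
  refine Submodule.iSup_induction (motive := fun a : A => a * b ∈ Asub 𝒜 (m + n))
      (fun i : {i : ℤ // i ≤ m} => 𝒜 i.1) ha (fun i x hx => ?_) (by show (0:A) * b ∈ _; rw [zero_mul]; exact zero_mem _)
      (fun x y hx hy => by show (x + y) * b ∈ _; beta_reduce at hx hy; rw [add_mul]; exact add_mem hx hy)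
  refine Submodule.iSup_induction (motive := fun b : A => x * b ∈ Asub 𝒜 (m + n))
      (fun j : {j : ℤ // j ≤ n} => 𝒜 j.1) hb (fun j y hy => ?_) (by show x * (0:A) ∈ _; rw [mul_zero]; exact zero_mem _)
      (fun y z hy hz => by show x * (y + z) ∈ _; beta_reduce at hy hz; rw [mul_add]; exact add_mem hy hz)
  exact mem_Asub_of_mem 𝒜 (add_le_add i.2 j.2) (SetLike.mul_mem_graded hx hy)

lemma coe_decompose_add (x y : A) (k : ℤ) :
    (DirectSum.decompose 𝒜 (x + y) k : A)
      = (DirectSum.decompose 𝒜 x k : A) + (DirectSum.decompose 𝒜 y k : A) := by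
  rw [DirectSum.decompose_add, DirectSum.add_apply]; rfl

lemma coe_decompose_sub (x y : A) (k : ℤ) :
    (DirectSum.decompose 𝒜 (x - y) k : A)
      = (DirectSum.decompose 𝒜 x k : A) - (DirectSum.decompose 𝒜 y k : A) := by
  rw [DirectSum.decompose_sub, DirectSum.sub_apply]; rfl

/-- top-degree truncation lemma -/
lemma sub_decompose_mem_Asub {n : ℤ} {a : A} (ha : a ∈ Asub 𝒜 n) :
    a - (DirectSum.decompose 𝒜 a n : A) ∈ Asub 𝒜 (n - 1) := by
  rw [mem_Asub_iff]
  intro j hj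
  rcases eq_or_lt_of_le (show n ≤ j by omega) with h | h
  · rw [← h, coe_decompose_sub, DirectSum.decompose_of_mem_same 𝒜 (DirectSum.decompose 𝒜 a n).2,
      sub_self]
  · rw [coe_decompose_sub, decompose_eq_zero_of_mem_Asub 𝒜 ha h,
      DirectSum.decompose_of_mem_ne 𝒜 (DirectSum.decompose 𝒜 a n).2 (by omega), sub_zero]

/-- Key torsion-freeness lemma: if `(t-1)c ∈ F_{≤n} A` then `c ∈ F_{≤ n-1} A`. -/
lemma key_lemma {t : A} (ht : t ∈ 𝒜 1) (hreg : ∀ x : A, t * x = 0 → x = 0)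
    {n : ℤ} {c : A} (h : (t - 1) * c ∈ Asub 𝒜 n) : c ∈ Asub 𝒜 (n - 1) := by
  classical
  by_contra hc
  rw [mem_Asub_iff] at hc
  push_neg at hc
  obtain ⟨j0, hj0, hc0⟩ := hc
  set s := (DFinsupp.support (DirectSum.decompose 𝒜 c)).filter (fun j => n - 1 < j) with hs
  have hj0s : j0 ∈ s := by
    rw [hs, Finset.mem_filter]
    exact ⟨DFinsupp.mem_support_iff.2 (fun h0 => hc0 (by rw [h0]; rfl)), hj0⟩
  have hsne : s.Nonempty := ⟨j0, hj0s⟩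
  set N := s.max' hsne with hN
  have hNs : N ∈ s := s.max'_mem hsne
  obtain ⟨hNsupp, hNgt⟩ := Finset.mem_filter.1 hNs
  have h1 : (DirectSum.decompose 𝒜 ((t - 1) * c) (1 + N) : A) = 0 :=
    decompose_eq_zero_of_mem_Asub 𝒜 h (by omega)
  have h2 : (DirectSum.decompose 𝒜 (t * c) (1 + N) : A)
      = t * (DirectSum.decompose 𝒜 c N : A) :=
    DirectSum.coe_decompose_mul_add_of_left_mem 𝒜 ht
  have h3 : (DirectSum.decompose 𝒜 c (1 + N) : A) = 0 := by
    have : (1 + N) ∉ DFinsupp.support (DirectSum.decompose 𝒜 c) := by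
      intro hmem
      have : 1 + N ∈ s := Finset.mem_filter.2 ⟨hmem, by omega⟩
      have := s.le_max' _ this
      omega
    rw [DFinsupp.notMem_support_iff.1 this]; rfl
  have h4 : (t - 1) * c = t * c - c := by noncomm_ring
  rw [h4, coe_decompose_sub, h2, h3, sub_zero] at h1
  have h5 : (DirectSum.decompose 𝒜 c N : A) = 0 := hreg _ h1
  exact (DFinsupp.mem_support_iff.1 hNsupp) (ZeroMemClass.coe_eq_zero.mp h5)

/-- The filtration `Fₙ B = ⨆_{i ≤ n} π(Aᵢ)` on `B = A/(t−1)A` induced by the grading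
of `A` via the quotient map `π`. -/
noncomputable def filtDeg {A B : Type} [Ring A] [Algebra ℂ A] [Ring B] [Algebra ℂ B]
    (𝒜 : ℤ → Submodule ℂ A) (π : A →ₐ[ℂ] B) (n : ℤ) : Submodule ℂ B :=
  ⨆ i : ℤ, ⨆ _ : i ≤ n, Submodule.map π.toLinearMap (𝒜 i)

section Aux2
variable {A₀ A B : Type} [Ring A₀] [Algebra ℂ A₀] [Ring A] [Algebra ℂ A]
  [Ring B] [Algebra ℂ B]
variable (𝒜 : ℤ → Submodule ℂ A) [GradedAlgebra 𝒜]
variable (π : A →ₐ[ℂ] B) (p : A →ₐ[ℂ] A₀) (𝒜₀ : ℤ → Submodule ℂ A₀)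

lemma filtDeg_eq (n : ℤ) : filtDeg 𝒜 π n = (Asub 𝒜 n).map π.toLinearMap := by
  rw [filtDeg, Asub]
  simp only [Submodule.map_iSup]

/-- `a ↦ p (aₙ)` as a linear map. -/
noncomputable def Fraw (n : ℤ) : A →ₗ[ℂ] A₀ where
  toFun a := p (DirectSum.decompose 𝒜 a n : A)
  map_add' a b := by
    show p (DirectSum.decompose 𝒜 (a + b) n : A) = _
    rw [coe_decompose_add 𝒜, map_add]
  map_smul' r a := by
    show p (DirectSum.decompose 𝒜 (r • a) n : A) = _
    rw [DirectSum.decompose_smul, DirectSum.smul_apply, SetLike.val_smul, map_smul]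
    rfl

/-- `a ↦ p (aₙ)` corestricted to `(𝒜₀)ₙ`. -/
noncomputable def Fmap (hgr : ∀ i : ℤ, Submodule.map p.toLinearMap (𝒜 i) = 𝒜₀ i) (n : ℤ) :
    A →ₗ[ℂ] 𝒜₀ n :=
  (Fraw 𝒜 p n).codRestrict (𝒜₀ n)
    (fun a => by rw [← hgr n]; exact ⟨_, (DirectSum.decompose 𝒜 a n).2, rfl⟩)

/-- `π` restricted to `F_{≤n} A`, corestricted to `Fₙ B`. -/
noncomputable def Gmap (n : ℤ) : (Asub 𝒜 n) →ₗ[ℂ] (filtDeg 𝒜 π n) :=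
  LinearMap.codRestrict _ (π.toLinearMap ∘ₗ (Asub 𝒜 n).subtype)
    (fun a => by rw [filtDeg_eq]; exact ⟨a, a.2, rfl⟩)

lemma Gmap_surjective (n : ℤ) : Function.Surjective (Gmap 𝒜 π n) := by
  rintro ⟨b, hb⟩
  rw [filtDeg_eq] at hb
  obtain ⟨a, ha, rfl⟩ := hb
  exact ⟨⟨a, ha⟩, rfl⟩

variable (hgr : ∀ i : ℤ, Submodule.map p.toLinearMap (𝒜 i) = 𝒜₀ i)

/-- The induced map `Fₙ B → (𝒜₀)ₙ`. -/
noncomputable def Ebar (n : ℤ)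
    (h0 : ∀ a : Asub 𝒜 n, π a = 0 → Fmap 𝒜 p 𝒜₀ hgr n a = 0) :
    (filtDeg 𝒜 π n) →ₗ[ℂ] 𝒜₀ n :=
  (Submodule.liftQ (LinearMap.ker (Gmap 𝒜 π n))
      ((Fmap 𝒜 p 𝒜₀ hgr n) ∘ₗ (Asub 𝒜 n).subtype)
      (fun a ha => by
        refine h0 a ?_
        have := congrArg (Subtype.val) (LinearMap.mem_ker.1 ha)
        exact this)) ∘ₗ
    (((Gmap 𝒜 π n).quotKerEquivOfSurjective (Gmap_surjective 𝒜 π n)).symm :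
      (filtDeg 𝒜 π n) →ₗ[ℂ] _)

lemma Ebar_Gmap (n : ℤ) (h0) (a : Asub 𝒜 n) :
    Ebar 𝒜 π p 𝒜₀ hgr n h0 (Gmap 𝒜 π n a) = Fmap 𝒜 p 𝒜₀ hgr n a := by
  have h1 : ((Gmap 𝒜 π n).quotKerEquivOfSurjective (Gmap_surjective 𝒜 π n)).symm
      (Gmap 𝒜 π n a) = Submodule.Quotient.mk a := by
    rw [LinearEquiv.symm_apply_eq]
    rfl
  rw [Ebar, LinearMap.comp_apply]
  erw [h1]
  erw [Submodule.liftQ_apply, LinearMap.comp_apply]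
end Aux2

/-- **Braverman–Gaitsgory.** Let `A₀` be a positively graded
`ℂ`-algebra and `A` a graded deformation of `A₀` over `ℂ[t]` (`t` in degree `1`):
`A` is a `ℤ`-graded `ℂ[t]`-algebra with `t ∈ A₁`, flat over `ℂ[t]`, together with a
graded surjection `p : A → A₀` with kernel `tA` (so `A/tA ≅ A₀` as graded algebras).
Then `B := A/(t−1)A` (presented by a surjection `π : A → B` with kernel `(t−1)A`) is
a filtered algebra, with filtration `Fₙ B = image of ⊕_{i≤n} Aᵢ`, whose associated
graded algebra is isomorphic to `A₀`: there are `ℂ`-linear isomorphisms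
`Fₙ B / F_{n−1} B ≃ (A₀)ₙ` compatible with multiplication. -/
theorem stmt6 {A₀ A B : Type} [Ring A₀] [Algebra ℂ A₀] [Ring A] [Algebra ℂ A]
    [Ring B] [Algebra ℂ B]
    [Algebra (Polynomial ℂ) A] [IsScalarTower ℂ (Polynomial ℂ) A]
    (𝒜₀ : ℤ → Submodule ℂ A₀) [GradedAlgebra 𝒜₀]
    (hpos : ∀ i : ℤ, i < 0 → 𝒜₀ i = ⊥)
    (𝒜 : ℤ → Submodule ℂ A) [GradedAlgebra 𝒜]
    (ht : algebraMap (Polynomial ℂ) A Polynomial.X ∈ 𝒜 1)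
    (hflat : Module.Flat (Polynomial ℂ) A)
    (p : A →ₐ[ℂ] A₀) (hp : Function.Surjective p)
    (hkerp : ∀ a : A, p a = 0 ↔
      ∃ c : A, a = algebraMap (Polynomial ℂ) A Polynomial.X * c)
    (hgr : ∀ i : ℤ, Submodule.map p.toLinearMap (𝒜 i) = 𝒜₀ i)
    (π : A →ₐ[ℂ] B) (hπ : Function.Surjective π)
    (hkerπ : ∀ a : A, π a = 0 ↔
      ∃ c : A, a = (algebraMap (Polynomial ℂ) A Polynomial.X - 1) * c) :
    ∃ e : ∀ n : ℤ,
        ((filtDeg 𝒜 π n) ⧸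
          ((filtDeg 𝒜 π (n - 1)).comap (filtDeg 𝒜 π n).subtype)) ≃ₗ[ℂ] 𝒜₀ n,
      ∀ (m n : ℤ) (x : filtDeg 𝒜 π m) (y : filtDeg 𝒜 π n)
        (hxy : (x : B) * (y : B) ∈ filtDeg 𝒜 π (m + n)),
        (e (m + n) (Submodule.Quotient.mk ⟨(x : B) * (y : B), hxy⟩) : A₀) =
          (e m (Submodule.Quotient.mk x) : A₀) * (e n (Submodule.Quotient.mk y) : A₀) := by
  classical
  set t : A := algebraMap (Polynomial ℂ) A Polynomial.X with htdef
  haveI := hflat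
  -- `t` is regular on `A` by flatness
  have hreg : ∀ x : A, t * x = 0 → x = 0 := by
    have h1 : IsSMulRegular (Polynomial ℂ) (Polynomial.X : Polynomial ℂ) := fun x y hxy => by
      simp only [smul_eq_mul] at hxy
      exact mul_left_cancel₀ Polynomial.X_ne_zero hxy
    have h2 : IsSMulRegular (TensorProduct (Polynomial ℂ) A (Polynomial ℂ))
        (Polynomial.X : Polynomial ℂ) := h1.lTensor (M := A)
    have h3 : IsSMulRegular A (Polynomial.X : Polynomial ℂ) :=
      h2.of_injective (TensorProduct.rid (Polynomial ℂ) A).symm.toLinearMap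
        (TensorProduct.rid (Polynomial ℂ) A).symm.injective
    intro x hx
    have hx' : (Polynomial.X : Polynomial ℂ) • x = (Polynomial.X : Polynomial ℂ) • (0 : A) := by
      rw [Algebra.smul_def, smul_zero, ← htdef, hx]
    exact h3 hx'
  have hpt : p t = 0 := (hkerp t).2 ⟨1, (mul_one t).symm⟩
  -- key well-definedness statement
  have hstrong : ∀ (n : ℤ) (a : A), a ∈ Asub 𝒜 n → π a ∈ filtDeg 𝒜 π (n - 1) →
      p (DirectSum.decompose 𝒜 a n : A) = 0 := by
    intro n a ha hπa
    rw [filtDeg_eq] at hπa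
    obtain ⟨a', ha', hπa'⟩ := hπa
    have h1 : π (a - a') = 0 := by
      rw [map_sub, show π a' = π a from hπa', sub_self]
    obtain ⟨c, hc⟩ := (hkerπ _).1 h1
    have h2 : (t - 1) * c ∈ Asub 𝒜 n := by
      rw [← hc]
      exact sub_mem ha (Asub_mono 𝒜 (by omega) ha')
    have h3 : c ∈ Asub 𝒜 (n - 1) := key_lemma 𝒜 ht hreg h2
    have ha'' : a = a' + (t - 1) * c := by rw [← hc]; noncomm_ring
    have hdt : (DirectSum.decompose 𝒜 (t * c) n : A)
        = t * (DirectSum.decompose 𝒜 c (n - 1) : A) := by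
      have h := DirectSum.coe_decompose_mul_add_of_left_mem 𝒜 (b := c) ht (j := n - 1)
      rwa [show (1 : ℤ) + (n - 1) = n by ring] at h
    have h4 : (DirectSum.decompose 𝒜 a n : A) = t * (DirectSum.decompose 𝒜 c (n - 1) : A) := by
      rw [ha'', coe_decompose_add, decompose_eq_zero_of_mem_Asub 𝒜 (j := n) ha' (by omega),
        show (t - 1) * c = t * c - c by noncomm_ring, coe_decompose_sub, hdt,
        decompose_eq_zero_of_mem_Asub 𝒜 (j := n) h3 (by omega), sub_zero, zero_add]
    rw [h4, map_mul, hpt, zero_mul]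
  have h0 : ∀ (n : ℤ) (a : Asub 𝒜 n), π a = 0 → Fmap 𝒜 p 𝒜₀ hgr n a = 0 := by
    intro n a hπa
    apply Subtype.ext
    show p (DirectSum.decompose 𝒜 (a : A) n : A) = 0
    exact hstrong n a a.2 (by rw [hπa]; exact zero_mem _)
  have hsurj : ∀ n, Function.Surjective (Ebar 𝒜 π p 𝒜₀ hgr n (h0 n)) := by
    intro n x
    have hx : (x : A₀) ∈ Submodule.map p.toLinearMap (𝒜 n) := by rw [hgr n]; exact x.2
    obtain ⟨a, ha, hpa⟩ := hx
    refine ⟨Gmap 𝒜 π n ⟨a, mem_Asub_of_mem 𝒜 le_rfl ha⟩, ?_⟩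
    rw [Ebar_Gmap]
    apply Subtype.ext
    show p (DirectSum.decompose 𝒜 a n : A) = (x : A₀)
    rw [DirectSum.decompose_of_mem_same 𝒜 ha]
    exact hpa
  have hker : ∀ n, (filtDeg 𝒜 π (n - 1)).comap (filtDeg 𝒜 π n).subtype
      = LinearMap.ker (Ebar 𝒜 π p 𝒜₀ hgr n (h0 n)) := by
    intro n
    ext x
    obtain ⟨a, rfl⟩ := Gmap_surjective 𝒜 π n x
    rw [Submodule.mem_comap, LinearMap.mem_ker, Ebar_Gmap]
    have hGa : ((filtDeg 𝒜 π n).subtype (Gmap 𝒜 π n a) : B) = π (a : A) := rfl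
    rw [hGa]
    constructor
    · intro hmem
      apply Subtype.ext
      show p (DirectSum.decompose 𝒜 (a : A) n : A) = 0
      exact hstrong n a a.2 hmem
    · intro hF
      have hF' : p (DirectSum.decompose 𝒜 (a : A) n : A) = 0 := congrArg Subtype.val hF
      obtain ⟨c, hc⟩ := (hkerp _).1 hF'
      set cn := (DirectSum.decompose 𝒜 c (n - 1) : A) with hcndef
      have hcn : cn ∈ 𝒜 (n - 1) := (DirectSum.decompose 𝒜 c (n - 1)).2
      have h1 : (DirectSum.decompose 𝒜 (a : A) n : A) = t * cn := by
        have h2 : (DirectSum.decompose 𝒜 (t * c) n : A) = t * cn := by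
          have h := DirectSum.coe_decompose_mul_add_of_left_mem 𝒜 (b := c) ht (j := n - 1)
          rwa [show (1 : ℤ) + (n - 1) = n by ring] at h
        calc (DirectSum.decompose 𝒜 (a : A) n : A)
            = (DirectSum.decompose 𝒜 ((DirectSum.decompose 𝒜 (a : A) n : A)) n : A) :=
              (DirectSum.decompose_of_mem_same 𝒜 (DirectSum.decompose 𝒜 (a : A) n).2).symm
          _ = (DirectSum.decompose 𝒜 (t * c) n : A) := by rw [← hc]
          _ = t * cn := h2
      have h6 : π ((DirectSum.decompose 𝒜 (a : A) n : A)) = π cn := by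
        rw [h1, show t * cn = (t - 1) * cn + cn by noncomm_ring, map_add,
          (hkerπ _).2 ⟨cn, rfl⟩, zero_add]
      have hsplit : π (a : A)
          = π ((a : A) - (DirectSum.decompose 𝒜 (a : A) n : A)) + π cn := by
        rw [← h6, ← map_add, sub_add_cancel]
      rw [hsplit]
      refine add_mem ?_ ?_
      · rw [filtDeg_eq]
        exact ⟨_, sub_decompose_mem_Asub 𝒜 a.2, rfl⟩
      · rw [filtDeg_eq]
        exact ⟨cn, mem_Asub_of_mem 𝒜 le_rfl hcn, rfl⟩
  have hdec : ∀ (m n : ℤ) (a b : A), a ∈ Asub 𝒜 m → b ∈ Asub 𝒜 n →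
      (DirectSum.decompose 𝒜 (a * b) (m + n) : A)
        = (DirectSum.decompose 𝒜 a m : A) * (DirectSum.decompose 𝒜 b n : A) := by
    intro m n a b ha hb
    set am := (DirectSum.decompose 𝒜 a m : A) with ham
    set bn := (DirectSum.decompose 𝒜 b n : A) with hbn
    have hamm : am ∈ 𝒜 m := (DirectSum.decompose 𝒜 a m).2
    have hbnn : bn ∈ 𝒜 n := (DirectSum.decompose 𝒜 b n).2
    have hsplit : a * b = ((a - am) * b + am * (b - bn)) + am * bn := by noncomm_ring
    have h1 : (a - am) * b ∈ Asub 𝒜 (m + n - 1) := by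
      have h := mul_mem_Asub 𝒜 (sub_decompose_mem_Asub 𝒜 ha) hb
      rwa [show m - 1 + n = m + n - 1 by ring] at h
    have h2 : am * (b - bn) ∈ Asub 𝒜 (m + n - 1) := by
      have h := mul_mem_Asub 𝒜 (mem_Asub_of_mem 𝒜 le_rfl hamm) (sub_decompose_mem_Asub 𝒜 hb)
      rwa [show m + (n - 1) = m + n - 1 by ring] at h
    rw [hsplit, coe_decompose_add, coe_decompose_add,
      decompose_eq_zero_of_mem_Asub 𝒜 h1 (by omega),
      decompose_eq_zero_of_mem_Asub 𝒜 h2 (by omega),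
      DirectSum.decompose_of_mem_same 𝒜 (SetLike.mul_mem_graded hamm hbnn),
      zero_add, zero_add]
  refine ⟨fun n => (Submodule.quotEquivOfEq _ _ (hker n)).trans
      ((Ebar 𝒜 π p 𝒜₀ hgr n (h0 n)).quotKerEquivOfSurjective (hsurj n)), ?_⟩
  intro m n x y hxy
  obtain ⟨a, rfl⟩ := Gmap_surjective 𝒜 π m x
  obtain ⟨b, rfl⟩ := Gmap_surjective 𝒜 π n y
  have heval : ∀ (k : ℤ) (z : filtDeg 𝒜 π k),
      ((Submodule.quotEquivOfEq _ _ (hker k)).trans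
        ((Ebar 𝒜 π p 𝒜₀ hgr k (h0 k)).quotKerEquivOfSurjective (hsurj k)))
        (Submodule.Quotient.mk z) = Ebar 𝒜 π p 𝒜₀ hgr k (h0 k) z := by
    intro k z
    rw [LinearEquiv.trans_apply, Submodule.quotEquivOfEq_mk]
    rfl
  have hab : (⟨((Gmap 𝒜 π m a : filtDeg 𝒜 π m) : B) * ((Gmap 𝒜 π n b : filtDeg 𝒜 π n) : B), hxy⟩
        : filtDeg 𝒜 π (m + n))
      = Gmap 𝒜 π (m + n) ⟨(a : A) * (b : A), mul_mem_Asub 𝒜 a.2 b.2⟩ := by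
    apply Subtype.ext
    show (π (a : A)) * (π (b : A)) = π ((a : A) * (b : A))
    rw [map_mul]
  simp only [heval, hab, Ebar_Gmap]
  show p (DirectSum.decompose 𝒜 ((a : A) * (b : A)) (m + n) : A)
      = p (DirectSum.decompose 𝒜 (a : A) m : A) * p (DirectSum.decompose 𝒜 (b : A) n : A)
  rw [hdec m n a b a.2 b.2, map_mul]
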